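/- Let n ≥ k ≥ 1 and Y ∈ ℝ^{n×k}. Then Y satisfies the three conditions YᵀY = I_k, (YYᵀ)𝟙 = 𝟙 (where 𝟙 ∈ ℝ^n is the all-ones vector), and Y ≥ 0 entrywise, if and only if there exists a partition of {1,…,n} into nonempty disjoint sets S_1, …, S_k with S_1 ∪ ⋯ ∪ S_k = {1,…,n} such that Y_{ij} = 1/√(|S_j|) if i ∈ S_j and Y_{ij} = 0 otherwise. -/

import Mathlib

open Matrix

/-- The feasible set of the matrix reformulation of k-means clustering consists
exactly of the column-normalized indicator matrices of partitions of `{1,…,n}`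
into `k` nonempty clusters. -/
theorem kmeans_feasible_iff_partition {n k : ℕ} (hk : 1 ≤ k) (hnk : k ≤ n)
    (Y : Matrix (Fin n) (Fin k) ℝ) :
    (Yᵀ * Y = 1 ∧ (Y * Yᵀ) *ᵥ (fun _ => (1 : ℝ)) = (fun _ => (1 : ℝ)) ∧
      ∀ i j, 0 ≤ Y i j)
    ↔ ∃ S : Fin k → Finset (Fin n),
        (∀ j, (S j).Nonempty) ∧
        (∀ j₁ j₂, j₁ ≠ j₂ → Disjoint (S j₁) (S j₂)) ∧
        (∀ i, ∃ j, i ∈ S j) ∧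
        (∀ i j, Y i j = if i ∈ S j then 1 / Real.sqrt ((S j).card) else 0) := by
  constructor
  · rintro ⟨h1, h2, h3⟩
    -- orthonormality of columns
    have hA : ∀ j₁ j₂ : Fin k, ∑ i, Y i j₁ * Y i j₂ = if j₁ = j₂ then (1:ℝ) else 0 := by
      intro j₁ j₂
      have := congrFun (congrFun h1 j₁) j₂
      simpa [Matrix.mul_apply, Matrix.transpose_apply, Matrix.one_apply] using this
    -- row-sum condition
    have hB : ∀ i, ∑ j, Y i j * (∑ l, Y l j) = 1 := by
      intro i
      have := congrFun h2 i
      simp only [Matrix.mulVec, dotProduct, Matrix.mul_apply, Matrix.transpose_apply,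
        mul_one] at this
      rw [← this, Finset.sum_comm]
      simp [Finset.mul_sum, mul_comm]
    -- disjoint supports of distinct columns
    have hC : ∀ j₁ j₂ : Fin k, j₁ ≠ j₂ → ∀ i, Y i j₁ = 0 ∨ Y i j₂ = 0 := by
      intro j₁ j₂ h i
      have h0 : ∑ i, Y i j₁ * Y i j₂ = 0 := by rw [hA]; simp [h]
      have := (Finset.sum_eq_zero_iff_of_nonneg
        (fun i _ => mul_nonneg (h3 i j₁) (h3 i j₂))).1 h0 i (Finset.mem_univ i)
      exact mul_eq_zero.1 this
    set S : Fin k → Finset (Fin n) :=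
      fun j => Finset.univ.filter (fun i => Y i j ≠ 0) with hS
    have hmemS : ∀ i j, i ∈ S j ↔ Y i j ≠ 0 := by
      intro i j; simp [hS]
    -- each column has a nonzero entry
    have hne : ∀ j, ∃ i, Y i j ≠ 0 := by
      intro j
      by_contra h
      push_neg at h
      have h' := hA j j
      simp [h] at h'
    -- key product identity
    have hmem1 : ∀ i j, Y i j ≠ 0 → Y i j * (∑ l, Y l j) = 1 := by
      intro i j hij
      have hB' := hB i
      have hz : ∀ j' ∈ Finset.univ, j' ≠ j → Y i j' * (∑ l, Y l j') = 0 := by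
        intro j' _ hj'
        rcases hC j' j hj' i with h | h
        · rw [h, zero_mul]
        · exact absurd h hij
      rw [Finset.sum_eq_single_of_mem j (Finset.mem_univ j) hz] at hB'
      exact hB'
    have hcpos : ∀ j, 0 < ∑ l, Y l j := by
      intro j
      obtain ⟨i, hi⟩ := hne j
      have hnz : (∑ l, Y l j) ≠ 0 := by
        intro h
        have := hmem1 i j hi
        rw [h, mul_zero] at this
        norm_num at this
      exact lt_of_le_of_ne (Finset.sum_nonneg fun l _ => h3 l j) (Ne.symm hnz)
    have hval : ∀ i j, Y i j ≠ 0 → Y i j = 1 / (∑ l, Y l j) := by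
      intro i j hij
      exact (eq_div_iff (hcpos j).ne').2 (hmem1 i j hij)
    -- cardinality identity
    have hcard : ∀ j, ((S j).card : ℝ) = (∑ l, Y l j) ^ 2 := by
      intro j
      have h1' : ∑ i ∈ S j, Y i j * Y i j = 1 := by
        have hAj := hA j j
        rw [if_pos rfl] at hAj
        rw [← hAj]
        apply Finset.sum_subset (Finset.subset_univ _)
        intro x _ hx
        have : Y x j = 0 := by
          by_contra h
          exact hx ((hmemS x j).2 h)
        rw [this, zero_mul]
      have h2' : ∑ i ∈ S j, Y i j * Y i j
          = (S j).card * ((1 / (∑ l, Y l j)) * (1 / (∑ l, Y l j))) := by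
        rw [Finset.sum_congr rfl (fun i hi => by
          rw [hval i j ((hmemS i j).1 hi)]), Finset.sum_const, nsmul_eq_mul]
      rw [h2'] at h1'
      have hc := hcpos j
      field_simp at h1'
      rw [h1', sq]
    have hsqrt : ∀ j, Real.sqrt ((S j).card) = ∑ l, Y l j := by
      intro j
      rw [hcard j, Real.sqrt_sq (hcpos j).le]
    refine ⟨S, ?_, ?_, ?_, ?_⟩
    · intro j
      obtain ⟨i, hi⟩ := hne j
      exact ⟨i, (hmemS i j).2 hi⟩
    · intro j₁ j₂ hj
      rw [Finset.disjoint_left]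
      intro i hi1 hi2
      rcases hC j₁ j₂ hj i with h | h
      · exact (hmemS i j₁).1 hi1 h
      · exact (hmemS i j₂).1 hi2 h
    · intro i
      by_contra h
      push_neg at h
      have hz : ∀ j, Y i j = 0 := by
        intro j
        by_contra h'
        exact h j ((hmemS i j).2 h')
      have := hB i
      simp [hz] at this
    · intro i j
      by_cases h : i ∈ S j
      · rw [if_pos h, hsqrt j]
        exact hval i j ((hmemS i j).1 h)
      · rw [if_neg h]
        by_contra h'
        exact h ((hmemS i j).2 h')
  · rintro ⟨S, hne, hdis, hcov, hY⟩
    have hcard0 : ∀ j, ((S j).card : ℝ) ≠ 0 := by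
      intro j
      exact_mod_cast Finset.card_ne_zero_of_mem (hne j).choose_spec
    have hsq : ∀ j, Real.sqrt ((S j).card) * Real.sqrt ((S j).card) = ((S j).card : ℝ) :=
      fun j => Real.mul_self_sqrt (Nat.cast_nonneg _)
    have hsqrt_ne : ∀ j, Real.sqrt ((S j).card) ≠ 0 := by
      intro j h
      apply hcard0 j
      rw [← hsq j, h, mul_zero]
    -- column sums
    have hcolsum : ∀ j, ∑ l, Y l j = Real.sqrt ((S j).card) := by
      intro j
      have : ∀ l, Y l j = if l ∈ S j then 1 / Real.sqrt ((S j).card) else 0 := fun l => hY l j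
      rw [Finset.sum_congr rfl (fun l _ => this l), Finset.sum_ite_mem, Finset.univ_inter,
        Finset.sum_const, nsmul_eq_mul]
      field_simp
      rw [sq, hsq]
    refine ⟨?_, ?_, ?_⟩
    · -- YᵀY = 1
      ext j₁ j₂
      simp only [Matrix.mul_apply, Matrix.transpose_apply, Matrix.one_apply]
      rcases eq_or_ne j₁ j₂ with rfl | hj
      · rw [if_pos rfl]
        have : ∀ i, Y i j₁ * Y i j₁ = if i ∈ S j₁ then 1 / ((S j₁).card : ℝ) else 0 := by
          intro i
          rw [hY i j₁]
          by_cases h : i ∈ S j₁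
          · rw [if_pos h, if_pos h, div_mul_div_comm, one_mul, hsq]
          · rw [if_neg h, if_neg h, mul_zero]
        rw [Finset.sum_congr rfl (fun i _ => this i), Finset.sum_ite_mem,
          Finset.univ_inter, Finset.sum_const, nsmul_eq_mul]
        field_simp
      · rw [if_neg hj]
        apply Finset.sum_eq_zero
        intro i _
        rw [hY i j₁, hY i j₂]
        by_cases h : i ∈ S j₁
        · rw [if_neg (Finset.disjoint_left.1 (hdis j₁ j₂ hj) h), mul_zero]
        · rw [if_neg h, zero_mul]
    · -- row sums
      funext i
      simp only [Matrix.mulVec, dotProduct, Matrix.mul_apply, Matrix.transpose_apply, mul_one]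
      rw [Finset.sum_comm]
      have : ∀ j, ∑ l, Y i j * Y l j = if i ∈ S j then (1:ℝ) else 0 := by
        intro j
        rw [← Finset.mul_sum, hcolsum j, hY i j]
        by_cases h : i ∈ S j
        · rw [if_pos h, if_pos h, div_mul_cancel₀ 1 (hsqrt_ne j)]
        · rw [if_neg h, if_neg h, zero_mul]
      rw [Finset.sum_congr rfl (fun j _ => this j)]
      obtain ⟨j₀, hj₀⟩ := hcov i
      rw [Finset.sum_eq_single_of_mem j₀ (Finset.mem_univ j₀)]
      · rw [if_pos hj₀]
      · intro j' _ hj'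
        rw [if_neg]
        intro hmem
        exact (Finset.disjoint_left.1 (hdis j' j₀ hj') hmem) hj₀
    · intro i j
      rw [hY i j]
      by_cases h : i ∈ S j
      · rw [if_pos h]
        positivity
      · rw [if_neg h]
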